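/- Let A be a d×d binary matrix whose digraph has the property that every cycle passes through a right-free vertex, and let x = x_1⋯x_{n+1} ∈ P_n be a based closed walk containing at least two right-free vertices, with x_s the first and x_r the second right-free position. Then r − s = l if and only if x ∈ L(P_{n−l}, Ξ_l), where L and Ξ are as defined by insertion after the first right-free vertex. -/

import Mathlib

open Matrix Polynomial

/-- `i → j` is an edge in the digraph of the binary matrix `A`. -/
def adjB {d : ℕ} (A : Fin d → Fin d → Bool) (i j : Fin d) : Prop := A i j = true

/-- `i` is a right free generator: its row of `A` is all ones. -/
def rfB {d : ℕ} (A : Fin d → Fin d → Bool) (i : Fin d) : Prop := ∀ j, A i j = true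

/-- The letter at position `s` (0-based) of the word `l` is right free. -/
def rfAt {d : ℕ} (A : Fin d → Fin d → Bool) (l : List (Fin d)) (s : ℕ) : Prop :=
  ∃ h : s < l.length, rfB A (l.get ⟨s, h⟩)

/-- `l` is a based closed walk of length `n` in the digraph of `A`
(recorded as the list of its `n` vertices, with the closing edge from the
last vertex back to the first). -/
def isClosedWalk {d : ℕ} (A : Fin d → Fin d → Bool) (n : ℕ) (l : List (Fin d)) : Prop :=
  l.length = n ∧ l.Chain' (adjB A) ∧ ∃ h : l ≠ [], adjB A (l.getLast h) (l.head h)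

/-- `l` is a based closed walk of length `n` whose unique right free vertex is the last one. -/
def isXiWalk {d : ℕ} (A : Fin d → Fin d → Bool) (n : ℕ) (l : List (Fin d)) : Prop :=
  isClosedWalk A n l ∧ rfAt A l (n - 1) ∧ ∀ k < n - 1, ¬ rfAt A l k

/-- `ξ_n`: the number of based closed walks of length `n` whose unique right free
vertex is the last one. -/
noncomputable def xiCount {d : ℕ} (A : Fin d → Fin d → Bool) (n : ℕ) : ℕ :=
  {l : List (Fin d) | isXiWalk A n l}.ncard

/-- `G = ⟨Σ | R_A⟩` has a finite representation: there are only finitely many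
reduced words containing no right free generator except possibly at the last position. -/
def FiniteRep {d : ℕ} (A : Fin d → Fin d → Bool) : Prop :=
  {l : List (Fin d) | l ≠ [] ∧ l.Chain' (adjB A) ∧ ∀ k < l.length - 1, ¬ rfAt A l k}.Finite

/-- Every cycle in the digraph of `A` passes through a right free vertex. -/
def CyclesHitRF {d : ℕ} (A : Fin d → Fin d → Bool) : Prop :=
  ∀ l : List (Fin d), l.Chain' (adjB A) →
    (∃ h : l ≠ [], adjB A (l.getLast h) (l.head h)) → ∃ k, rfAt A l k

/-- The 0-1 matrix of `A` with natural number entries. -/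
def AmatN {d : ℕ} (A : Fin d → Fin d → Bool) : Matrix (Fin d) (Fin d) ℕ :=
  Matrix.of fun i j => if A i j then 1 else 0

/-- The 0-1 matrix of `A` with real entries. -/
def AmatR {d : ℕ} (A : Fin d → Fin d → Bool) : Matrix (Fin d) (Fin d) ℝ :=
  Matrix.of fun i j => if A i j then 1 else 0

/-- `T(Ξ_n)`: all cyclic rotations of the walks in `Ξ_n`. -/
def rotSet {d : ℕ} (A : Fin d → Fin d → Bool) (n : ℕ) : Set (List (Fin d)) :=
  {x | ∃ l, isXiWalk A n l ∧ ∃ i, i < n ∧ x = l.drop i ++ l.take i}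

/-- `L(P_m, Ξ_l)`: walks obtained from a based closed walk `u` of length `m` and a
walk `v ∈ Ξ_l` by inserting `v` into `u` immediately after the first right free
vertex of `u` (at 0-based position `s`). -/
def insSet {d : ℕ} (A : Fin d → Fin d → Bool) (m l0 : ℕ) : Set (List (Fin d)) :=
  {x | ∃ u v s, isClosedWalk A m u ∧ isXiWalk A l0 v ∧ rfAt A u s ∧
    (∀ k < s, ¬ rfAt A u k) ∧ x = u.take (s + 1) ++ v ++ u.drop (s + 1)}

lemma rfAt_iff' {d : ℕ} {A : Fin d → Fin d → Bool} {x : List (Fin d)} {k : ℕ} :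
    rfAt A x k ↔ ∃ i, x[k]? = some i ∧ rfB A i := by
  constructor
  · rintro ⟨h, hrf⟩
    exact ⟨x[k], List.getElem?_eq_getElem h, by simpa using hrf⟩
  · rintro ⟨i, hi, hrf⟩
    obtain ⟨h, he⟩ := List.getElem?_eq_some_iff.mp hi
    exact ⟨h, by simpa [he] using hrf⟩

lemma getLast_eq_of_getLast? {α : Type*} {l : List α} (h : l ≠ []) {a : α}
    (ha : l.getLast? = some a) : l.getLast h = a := by
  rw [List.getLast?_eq_getLast h] at ha
  exact Option.some_injective _ ha

lemma head_eq_of_head? {α : Type*} {l : List α} (h : l ≠ []) {a : α}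
    (ha : l.head? = some a) : l.head h = a := by
  rw [List.head?_eq_head h] at ha
  exact Option.some_injective _ ha

/-- **Lemma 3.4.** Suppose every cycle of the digraph of `A` passes
through a right free vertex.  Let `x ∈ P_n` be a based closed walk whose first and
second right free positions are `s` and `r` (0-based).  Then `r − s = l` if and
only if `x ∈ L(P_{n−l}, Ξ_l)`. -/
theorem first_second_free_distance {d : ℕ} (A : Fin d → Fin d → Bool)
    (hcyc : CyclesHitRF A) (n l : ℕ) (x : List (Fin d))
    (hx : isClosedWalk A n x)
    (s r : ℕ) (hs : rfAt A x s) (hsmin : ∀ k < s, ¬ rfAt A x k)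
    (hr : rfAt A x r) (hsr : s < r) (hrmin : ∀ k, s < k → k < r → ¬ rfAt A x k) :
    r - s = l ↔ x ∈ insSet A (n - l) l := by
  obtain ⟨hxlen, hxch, hxne, hxcl⟩ := hx
  obtain ⟨hsn, hsrf⟩ := hs
  obtain ⟨hrn, hrrf⟩ := hr
  rw [List.get_eq_getElem] at hsrf hrrf
  have hsx : x[s]? = some (x[s]) := List.getElem?_eq_getElem hsn
  have hrx : x[r]? = some (x[r]) := List.getElem?_eq_getElem hrn
  have hsn' : s < n := hxlen ▸ hsn
  have hrn' : r < n := hxlen ▸ hrn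
  constructor
  · intro heq
    subst heq
    have hT : (x.take (s+1)).length = s + 1 := by rw [List.length_take]; omega
    have hD : (x.drop (r+1)).length = n - (r+1) := by rw [List.length_drop, hxlen]
    have hV : ((x.drop (s+1)).take (r-s)).length = r - s := by
      rw [List.length_take, List.length_drop, hxlen]; omega
    have hune : x.take (s+1) ++ x.drop (r+1) ≠ [] := by
      intro h
      have := congrArg List.length h
      rw [List.length_append, hT] at this
      simp at this
    have hvne : (x.drop (s+1)).take (r-s) ≠ [] := by
      intro h
      rw [h] at hV
      simp at hV
      omega
    have hulen : (x.take (s+1) ++ x.drop (r+1)).length = n - (r - s) := by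
      rw [List.length_append, hT, hD]; omega
    -- element computations
    have E1 : ∀ k ≤ s, (x.take (s+1) ++ x.drop (r+1))[k]? = x[k]? := by
      intro k hk
      rw [List.getElem?_append_left (by omega), List.getElem?_take, if_pos (by omega)]
    have E2 : ∀ k, s + 1 ≤ k →
        (x.take (s+1) ++ x.drop (r+1))[k]? = x[k + (r - s)]? := by
      intro k hk
      rw [List.getElem?_append_right (by omega), hT, List.getElem?_drop]
      congr 1
      omega
    have EV : ∀ k, ((x.drop (s+1)).take (r-s))[k]? = if k < r - s then x[s+1+k]? else none := by
      intro k
      rw [List.getElem?_take, List.getElem?_drop]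
    refine ⟨x.take (s+1) ++ x.drop (r+1), (x.drop (s+1)).take (r-s), s,
      ⟨hulen, ?_, hune, ?_⟩, ⟨⟨hV, ?_, hvne, ?_⟩, ?_, ?_⟩, ?_, ?_, ?_⟩
    · -- chain of u
      rw [List.Chain', List.isChain_append]
      refine ⟨hxch.infix (List.take_prefix _ _).isInfix,
        hxch.infix (List.drop_suffix _ _).isInfix, ?_⟩
      intro a ha b hb
      have hlast : (x.take (s+1)).getLast? = some (x[s]) := by
        rw [List.getLast?_eq_getElem?, hT, Nat.add_sub_cancel, List.getElem?_take,
          if_pos (by omega), hsx]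
      rw [hlast, Option.mem_some_iff] at ha
      subst ha
      exact hsrf b
    · -- closing edge of u
      have hhead : (x.take (s+1) ++ x.drop (r+1)).head? = some (x[0]'(by omega)) := by
        rw [List.head?_eq_getElem?, E1 0 (by omega), List.getElem?_eq_getElem (by omega)]
      rw [head_eq_of_head? hune hhead]
      by_cases hc : r + 1 < n
      · have hlast : (x.take (s+1) ++ x.drop (r+1)).getLast? = some (x[n-1]'(by omega)) := by
          rw [List.getLast?_eq_getElem?, hulen, E2 (n - (r-s) - 1) (by omega)]
        
          rw [show n - (r - s) - 1 + (r - s) = n - 1 by omega,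
            List.getElem?_eq_getElem (by omega)]
        rw [getLast_eq_of_getLast? hune hlast]
        have h1 : x.getLast hxne = x[n-1]'(by omega) := by
          rw [List.getLast_eq_getElem]
          congr 1
          omega
        have h2 : x.head hxne = x[0]'(by omega) := List.head_eq_getElem _
        rw [h1, h2] at hxcl
        exact hxcl
      · have hlast : (x.take (s+1) ++ x.drop (r+1)).getLast? = some (x[s]) := by
          rw [List.getLast?_eq_getElem?, hulen, show n - (r-s) - 1 = s by omega,
            E1 s (le_refl _), hsx]
        rw [getLast_eq_of_getLast? hune hlast]
        exact hsrf _
    · -- chain of v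
      exact hxch.infix ((List.take_prefix _ _).isInfix.trans (List.drop_suffix _ _).isInfix)
    · -- closing edge of v
      have hlast : ((x.drop (s+1)).take (r-s)).getLast? = some (x[r]) := by
        rw [List.getLast?_eq_getElem?, hV, EV, if_pos (by omega),
          show s + 1 + (r - s - 1) = r by omega, hrx]
      rw [getLast_eq_of_getLast? hvne hlast]
      exact hrrf _
    · -- rfAt v (r-s-1)
      rw [rfAt_iff']
      refine ⟨x[r], ?_, hrrf⟩
      rw [EV, if_pos (by omega), show s + 1 + (r - s - 1) = r by omega, hrx]
    · -- minimality in v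
      intro k hk hcon
      rw [rfAt_iff'] at hcon
      obtain ⟨i, hi, hirf⟩ := hcon
      rw [EV, if_pos (by omega)] at hi
      exact hrmin (s+1+k) (by omega) (by omega) (rfAt_iff'.mpr ⟨i, hi, hirf⟩)
    · -- rfAt u s
      rw [rfAt_iff']
      exact ⟨x[s], by rw [E1 s (le_refl _), hsx], hsrf⟩
    · -- minimality in u
      intro k hk hcon
      rw [rfAt_iff'] at hcon
      obtain ⟨i, hi, hirf⟩ := hcon
      rw [E1 k (by omega)] at hi
      exact hsmin k hk (rfAt_iff'.mpr ⟨i, hi, hirf⟩)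
    · -- decomposition equality
      rw [List.take_left' hT, List.drop_left' hT]
      have hdd : x.drop (r+1) = (x.drop (s+1)).drop (r - s) := by
        rw [List.drop_drop]
        congr 1
        omega
      rw [List.append_assoc, hdd, List.take_append_drop, List.take_append_drop]
  · rintro ⟨u, v, s', ⟨hulen, huch, hune, hucl⟩, ⟨⟨hvlen, hvch, hvne, hvcl⟩, hvlast, hvmin⟩,
      hs', hs'min, hxeq⟩
    obtain ⟨hs'u, hs'rf⟩ := hs'
    rw [List.get_eq_getElem] at hs'rf
    have hl1 : 1 ≤ l := by
      have := List.length_pos_iff.mpr hvne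
      omega
    have hT : (u.take (s'+1)).length = s' + 1 := by rw [List.length_take]; omega
    have E1 : ∀ k ≤ s', x[k]? = u[k]? := by
      intro k hk
      rw [hxeq, List.getElem?_append_left (by rw [List.length_append, hT]; omega),
        List.getElem?_append_left (by omega), List.getElem?_take, if_pos (by omega)]
    have E2 : ∀ k, s' + 1 ≤ k → k < s' + 1 + l → x[k]? = v[k - (s'+1)]? := by
      intro k hk1 hk2
      rw [hxeq, List.getElem?_append_left (by rw [List.length_append, hT, hvlen]; omega),
        List.getElem?_append_right (by omega), hT]
    have claimA : rfAt A x s' := by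
      rw [rfAt_iff']
      exact ⟨u[s'], by rw [E1 s' (le_refl _)]; exact List.getElem?_eq_getElem hs'u, hs'rf⟩
    have claimB : ∀ k < s', ¬ rfAt A x k := by
      intro k hk hcon
      rw [rfAt_iff'] at hcon
      obtain ⟨i, hi, hirf⟩ := hcon
      rw [E1 k (by omega)] at hi
      exact hs'min k hk (rfAt_iff'.mpr ⟨i, hi, hirf⟩)
    have hss' : s = s' := by
      rcases Nat.lt_trichotomy s s' with h | h | h
      · exact absurd ⟨hsn, by rw [List.get_eq_getElem]; exact hsrf⟩ (claimB s h)
      · exact h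
      · exact absurd claimA (hsmin s' h)
    have claimC : rfAt A x (s' + l) := by
      rw [rfAt_iff']
      refine ⟨v[l-1]'(by omega), ?_, ?_⟩
      · rw [E2 (s' + l) (by omega) (by omega), show s' + l - (s'+1) = l - 1 by omega]
        exact List.getElem?_eq_getElem (by omega)
      · have := hvlast
        obtain ⟨h1, h2⟩ := this
        rw [List.get_eq_getElem] at h2
        exact h2
    have claimD : ∀ k, s' < k → k < s' + l → ¬ rfAt A x k := by
      intro k hk1 hk2 hcon
      rw [rfAt_iff'] at hcon
      obtain ⟨i, hi, hirf⟩ := hcon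
      rw [E2 k (by omega) (by omega)] at hi
      exact hvmin (k - (s'+1)) (by omega) (rfAt_iff'.mpr ⟨i, hi, hirf⟩)
    rcases Nat.lt_trichotomy r (s' + l) with h | h | h
    · exact absurd ⟨hrn, by rw [List.get_eq_getElem]; exact hrrf⟩ (claimD r (by omega) h)
    · omega
    · exact absurd claimC (hrmin (s' + l) (by omega) h)
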